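/- Fix an integer q ≥ 2, finite types E (edges) and U (plaquettes), a ZMod q-linear map δ¹ : (E → ZMod q) → (U → ZMod q), a real β, and p = 1 - e^{-β}. Then Σ_{f : E → ZMod q} exp(β · #{x ∈ U : δ¹ f x = 0}) = e^{β|U|} · Σ_{S ⊆ U} p^{|S|} (1-p)^{|U|-|S|} · #{f : E → ZMod q | ∀ x ∈ S, δ¹ f x = 0}. (Expansion of the Potts lattice gauge theory partition function over percolation configurations.) -/
import Mathlib


/-- Expansion of the Potts lattice gauge theory partition function over
percolation configurations:
`Σ_f exp(β · #{x : δ¹ f x = 0})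
  = e^{β|U|} · Σ_{S ⊆ U} p^{|S|}(1-p)^{|U|-|S|} · #{f | ∀ x ∈ S, δ¹ f x = 0}`
with `p = 1 - e^{-β}`. -/
theorem plgt_partition_expansion
    (q : ℕ) (hq : 2 ≤ q) [NeZero q] (E U : Type*) [DecidableEq E] [Fintype E] [Fintype U]
    [DecidableEq U]
    (δ1 : (E → ZMod q) →ₗ[ZMod q] (U → ZMod q))
    (β p : ℝ) (hp : p = 1 - Real.exp (-β)) :
    ∑ f : E → ZMod q,
        Real.exp (β * ((Finset.univ.filter fun x => δ1 f x = 0).card : ℝ))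
      = Real.exp (β * Fintype.card U) *
          ∑ S : Finset U,
            p ^ S.card * (1 - p) ^ (Fintype.card U - S.card) *
              (Nat.card {f : E → ZMod q // ∀ x ∈ S, δ1 f x = 0} : ℝ) := by
  have hq1 : (1 : ℝ) - p = Real.exp (-β) := by rw [hp]; ring
  -- per-configuration identity
  have key : ∀ f : E → ZMod q,
      Real.exp (β * ((Finset.univ.filter fun x => δ1 f x = 0).card : ℝ))
        = Real.exp (β * Fintype.card U) *
          ∏ x : U, ((if δ1 f x = 0 then p else 0) + (1 - p)) := by
    intro f
    rw [← Finset.prod_filter_mul_prod_filter_not Finset.univ (fun x => δ1 f x = 0)]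
    have h1 : ∏ x ∈ Finset.univ.filter (fun x => δ1 f x = 0),
        ((if δ1 f x = 0 then p else 0) + (1 - p)) = 1 := by
      apply Finset.prod_eq_one
      intro x hx
      rw [Finset.mem_filter] at hx
      rw [if_pos hx.2]; ring
    have h2 : ∏ x ∈ Finset.univ.filter (fun x => ¬ δ1 f x = 0),
        ((if δ1 f x = 0 then p else 0) + (1 - p))
        = Real.exp (-β) ^ (Finset.univ.filter (fun x => ¬ δ1 f x = 0)).card := by
      rw [Finset.prod_congr rfl (fun x hx => ?_), Finset.prod_const]
      rw [Finset.mem_filter] at hx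
      rw [if_neg hx.2, zero_add, hq1]
    rw [h1, h2, one_mul, ← Real.exp_nat_mul, ← Real.exp_add]
    congr 1
    have hab : (Finset.univ.filter (fun x => δ1 f x = 0)).card
        + (Finset.univ.filter (fun x => ¬ δ1 f x = 0)).card = Fintype.card U := by
      rw [Finset.card_filter_add_card_filter_not, Finset.card_univ]
    have : (Fintype.card U : ℝ) = (Finset.univ.filter (fun x => δ1 f x = 0)).card
        + (Finset.univ.filter (fun x => ¬ δ1 f x = 0)).card := by exact_mod_cast hab.symm
    rw [this]; ring
  rw [Finset.sum_congr rfl (fun f _ => key f), ← Finset.mul_sum]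
  congr 1
  have expand : ∀ f : E → ZMod q,
      ∏ x : U, ((if δ1 f x = 0 then p else 0) + (1 - p))
        = ∑ S : Finset U, (∏ x ∈ S, (if δ1 f x = 0 then p else 0)) *
            (1 - p) ^ (Fintype.card U - S.card) := by
    intro f
    rw [Finset.prod_add]
    rw [← Finset.powerset_univ]
    refine Finset.sum_congr rfl fun S hS => ?_
    rw [Finset.prod_const]
    congr 2
    rw [Finset.card_sdiff_of_subset (Finset.mem_powerset.mp hS), Finset.card_univ]
  rw [Finset.sum_congr rfl (fun f _ => expand f), Finset.sum_comm]
  refine Finset.sum_congr rfl fun S _ => ?_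
  have hprod : ∀ f : E → ZMod q,
      (∏ x ∈ S, (if δ1 f x = 0 then p else 0))
        = if (∀ x ∈ S, δ1 f x = 0) then p ^ S.card else 0 := by
    intro f
    by_cases h : ∀ x ∈ S, δ1 f x = 0
    · rw [if_pos h, Finset.prod_congr rfl (fun x hx => if_pos (h x hx)), Finset.prod_const]
    · rw [if_neg h]
      push_neg at h
      obtain ⟨x, hx, hx0⟩ := h
      exact Finset.prod_eq_zero hx (by rw [if_neg hx0])
  calc ∑ f : E → ZMod q, (∏ x ∈ S, (if δ1 f x = 0 then p else 0)) *
          (1 - p) ^ (Fintype.card U - S.card)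
      = ∑ f : E → ZMod q, (if (∀ x ∈ S, δ1 f x = 0) then
          p ^ S.card * (1 - p) ^ (Fintype.card U - S.card) else 0) := by
        refine Finset.sum_congr rfl fun f _ => ?_
        rw [hprod f]
        by_cases h : ∀ x ∈ S, δ1 f x = 0 <;> simp [h]
    _ = p ^ S.card * (1 - p) ^ (Fintype.card U - S.card) *
          (Nat.card {f : E → ZMod q // ∀ x ∈ S, δ1 f x = 0} : ℝ) := by
        rw [← Finset.sum_filter, Finset.sum_const, nsmul_eq_mul,
          Nat.card_eq_fintype_card, Fintype.card_subtype]
        ring
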